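/- Let θ be a nontrivial congruence of L_n and let k = min{x ∈ [1,n] : v(x/θ) = 2}. Then L_n/θ is isomorphic to L_k, and 0/θ, 1/θ, ..., k/θ are exactly all the equivalence classes of θ. -/

import Mathlib

/-- The accessibility relation of the line `L_n`: universe `{0,…,n}`, `x R y ↔ |x-y| ≤ 1`. -/
def lineR (n x y : ℕ) : Prop := x ≤ n ∧ y ≤ n ∧ x ≤ y + 1 ∧ y ≤ x + 1

/-- A congruence of the line `L_n`: an equivalence relation on `{0,…,n}` that is a bisimulation. -/
structure LineCong (n : ℕ) : Type where
  rel : ℕ → ℕ → Prop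
  refl : ∀ x, x ≤ n → rel x x
  symm : ∀ {x y}, rel x y → rel y x
  trans : ∀ {x y z}, rel x y → rel y z → rel x z
  dom : ∀ {x y}, rel x y → x ≤ n ∧ y ≤ n
  bisim : ∀ {x x' y}, rel x' x → lineR n x y → ∃ y', lineR n x' y' ∧ rel y' y

/-- The equivalence class `x/θ`. -/
def cls {n : ℕ} (θ : LineCong n) (x : ℕ) : Set ℕ := {y | θ.rel x y}

/-- The set of equivalence classes of `θ`. -/
def classes {n : ℕ} (θ : LineCong n) : Set (Set ℕ) := {S | ∃ x, x ≤ n ∧ S = cls θ x}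

/-- `qrel θ x y` holds iff `x/θ R_θ y/θ` in the quotient frame. -/
def qrel {n : ℕ} (θ : LineCong n) (x y : ℕ) : Prop :=
  ∃ x' y', θ.rel x' x ∧ θ.rel y' y ∧ lineR n x' y'

/-- `vq θ x` is the number of `R_θ`-successor classes of `x/θ` in the quotient frame. -/
noncomputable def vq {n : ℕ} (θ : LineCong n) (x : ℕ) : ℕ :=
  {S : Set ℕ | ∃ y, qrel θ x y ∧ S = cls θ y}.ncard

/-- `θ` is trivial: it has exactly one class. -/
def TrivialCong {n : ℕ} (θ : LineCong n) : Prop := ∀ x y, x ≤ n → y ≤ n → θ.rel x y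

/-- The step of `θ`: the number of classes minus one. -/
noncomputable def stepC {n : ℕ} (θ : LineCong n) : ℕ := (classes θ).ncard - 1

/-- `e` is an extreme of `θ`: its class is an endpoint of the quotient line. -/
def IsExtremeC {n : ℕ} (θ : LineCong n) (e : ℕ) : Prop := e ≤ n ∧ vq θ e ≤ 2

/-- The join of two congruences: the transitive closure of their union. -/
def joinRel {n : ℕ} (θ δ : LineCong n) : ℕ → ℕ → Prop :=
  Relation.TransGen (fun x y => θ.rel x y ∨ δ.rel x y)

/-- Inclusion of congruences. -/
def LeCong {n : ℕ} (θ δ : LineCong n) : Prop := ∀ x y, θ.rel x y → δ.rel x y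

/-- The frequency of `θ` : `|ext(θ)| - (number of rests) - 1`. -/
noncomputable def freqC {n : ℕ} (θ : LineCong n) : ℕ :=
  {e | IsExtremeC θ e}.ncard - {r | θ.rel r (r + 1)}.ncard - 1

/-- `Δ_r̄(x) = |{i : r_i < x}|`. -/
def deltaFn (m : ℕ) (r : Fin m → ℕ) (x : ℤ) : ℤ :=
  ((Finset.univ.filter (fun i => (r i : ℤ) < x)).card : ℤ)

/-- The relation `⟨k; r̄⟩` on `ℤ`:
`x ∼ y ↔ x - Δ(x) ≡ ±(y - Δ(y)) (mod 2k)`. -/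
def conr (k m : ℕ) (r : Fin m → ℕ) (x y : ℤ) : Prop :=
  x - deltaFn m r x ≡ y - deltaFn m r y [ZMOD (2 * (k : ℤ))] ∨
  x - deltaFn m r x ≡ -(y - deltaFn m r y) [ZMOD (2 * (k : ℤ))]


section auxZZ
variable {n : ℕ} (θ : LineCong n)

private lemma lineR_symmZ {x y : ℕ} (h : lineR n x y) : lineR n y x :=
  ⟨h.2.1, h.1, h.2.2.2, h.2.2.1⟩

private lemma cls_eq_of_relZ {x y : ℕ} (h : θ.rel x y) : cls θ x = cls θ y := by
  ext z
  exact ⟨fun hz => θ.trans (θ.symm h) hz, fun hz => θ.trans h hz⟩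

private lemma rel_of_cls_eqZ {x y : ℕ} (hx : x ≤ n) (h : cls θ x = cls θ y) : θ.rel x y := by
  have hm : x ∈ cls θ y := h ▸ (show x ∈ cls θ x from θ.refl x hx)
  exact θ.symm hm

private lemma qrel_symmZ {x y : ℕ} (h : qrel θ x y) : qrel θ y x := by
  obtain ⟨x', y', h1, h2, h3⟩ := h
  exact ⟨y', x', h2, h1, lineR_symmZ h3⟩

private lemma qrel_iffZ {x y : ℕ} (hx : x ≤ n) :
    qrel θ x y ↔ ∃ z, lineR n x z ∧ θ.rel z y := by
  constructor
  · rintro ⟨x', y', h1, h2, h3⟩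
    obtain ⟨z, hz1, hz2⟩ := θ.bisim (θ.symm h1) h3
    exact ⟨z, hz1, θ.trans hz2 h2⟩
  · rintro ⟨z, hz1, hz2⟩
    exact ⟨x, z, θ.refl x hx, hz2, hz1⟩

private lemma spreadZ {x : ℕ} (hx : x ≤ n)
    (hcov : ∀ z, lineR n x z → θ.rel x z) : TrivialCong θ := by
  have up : ∀ m, x ≤ m → m ≤ n → θ.rel x m := by
    intro m
    induction m with
    | zero =>
      intro h1 h2
      obtain rfl : x = 0 := Nat.le_zero.mp h1
      exact θ.refl 0 h2
    | succ m ih =>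
      intro h1 h2
      rcases eq_or_lt_of_le h1 with h | h
      · subst h; exact θ.refl _ h2
      · have hxm : x ≤ m := Nat.lt_succ_iff.mp h
        have hrel := ih hxm (Nat.le_of_succ_le h2)
        obtain ⟨y', hy1, hy2⟩ := θ.bisim hrel
          (show lineR n m (m+1) from ⟨Nat.le_of_succ_le h2, h2, by omega, by omega⟩)
        exact θ.trans (hcov _ hy1) hy2
  have down : ∀ d m, m + d = x → θ.rel x m := by
    intro d
    induction d with
    | zero =>
      intro m hm
      obtain rfl : m = x := by omega
      exact θ.refl _ hx
    | succ d ih =>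
      intro m hm
      have hrel := ih (m+1) (by omega)
      obtain ⟨y', hy1, hy2⟩ := θ.bisim hrel
        (show lineR n (m+1) m from ⟨by omega, by omega, by omega, by omega⟩)
      exact θ.trans (hcov _ hy1) hy2
  intro a b ha hb
  have hxa : θ.rel x a := by
    rcases le_or_gt x a with h | h
    · exact up a h ha
    · exact down (x - a) a (by omega)
  have hxb : θ.rel x b := by
    rcases le_or_gt x b with h | h
    · exact up b h hb
    · exact down (x - b) b (by omega)
  exact θ.trans (θ.symm hxa) hxb

private lemma vq_eq_middleZ {x : ℕ} (h1 : 1 ≤ x) (h2 : x + 1 ≤ n) :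
    vq θ x = ({cls θ (x-1), cls θ x, cls θ (x+1)} : Set (Set ℕ)).ncard := by
  have hx : x ≤ n := by omega
  have hset : {S : Set ℕ | ∃ y, qrel θ x y ∧ S = cls θ y}
      = ({cls θ (x-1), cls θ x, cls θ (x+1)} : Set (Set ℕ)) := by
    ext S
    simp only [Set.mem_setOf_eq, Set.mem_insert_iff, Set.mem_singleton_iff]
    constructor
    · rintro ⟨y, hq, rfl⟩
      obtain ⟨z, hz1, hz2⟩ := (qrel_iffZ θ hx).mp hq
      have hcz : cls θ y = cls θ z := (cls_eq_of_relZ θ hz2).symm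
      have hz3 : z = x - 1 ∨ z = x ∨ z = x + 1 := by
        obtain ⟨_, _, hA, hB⟩ := hz1; omega
      rcases hz3 with rfl | rfl | rfl
      · exact Or.inl hcz
      · exact Or.inr (Or.inl hcz)
      · exact Or.inr (Or.inr hcz)
    · rintro (rfl | rfl | rfl)
      · exact ⟨x-1, (qrel_iffZ θ hx).mpr ⟨x-1, ⟨hx, by omega, by omega, by omega⟩,
          θ.refl _ (by omega)⟩, rfl⟩
      · exact ⟨x, ⟨x, x, θ.refl _ hx, θ.refl _ hx, hx, hx, by omega, by omega⟩, rfl⟩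
      · exact ⟨x+1, (qrel_iffZ θ hx).mpr ⟨x+1, ⟨hx, by omega, by omega, by omega⟩,
          θ.refl _ (by omega)⟩, rfl⟩
  unfold vq
  rw [hset]

private lemma ncard_tripleZ {α : Type*} {a b c : α} (h1 : a ≠ b) (h2 : a ≠ c) (h3 : b ≠ c) :
    ({a, b, c} : Set α).ncard = 3 := by
  rw [Set.ncard_insert_of_notMem (by simp [h1, h2]) (Set.toFinite _), Set.ncard_pair h3]

end auxZZ


/-- For nontrivial `θ` with `k = min {x ∈ [1,n] : v(x/θ) = 2}`, the quotient is isomorphic to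
`L_k` and `0/θ, …, k/θ` are exactly all the classes. -/
theorem stmt_5 (n : ℕ) (θ : LineCong n) (hnt : ¬ TrivialCong θ) (k : ℕ)
    (hk : IsLeast {x | 1 ≤ x ∧ x ≤ n ∧ vq θ x = 2} k) :
    (∃ f : Set ℕ → ℕ,
      Set.BijOn f (classes θ) (Set.Iic k) ∧
      ∀ S ∈ classes θ, ∀ T ∈ classes θ,
        ((∃ x ∈ S, ∃ y ∈ T, lineR n x y) ↔ (f S ≤ f T + 1 ∧ f T ≤ f S + 1))) ∧
    (∀ S ∈ classes θ, ∃ j ≤ k, S = cls θ j) ∧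
    (∀ i ≤ k, ∀ j ≤ k, cls θ i = cls θ j → i = j) := by
  obtain ⟨hmem, hkmin⟩ := hk
  obtain ⟨hk1, hkn, hvqk⟩ := hmem
  -- F1 : 0 and 1 are not related
  have h01 : ¬ θ.rel 0 1 := by
    intro h
    apply hnt
    apply spreadZ θ (Nat.zero_le n)
    intro z hz
    have hz3 : z = 0 ∨ z = 1 := by obtain ⟨_, _, _, hB⟩ := hz; omega
    rcases hz3 with rfl | rfl
    · exact θ.refl 0 (Nat.zero_le n)
    · exact h
  -- F2 : for 1 ≤ x < k, the three neighbouring classes are pairwise distinct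
  have hdist : ∀ x, 1 ≤ x → x < k →
      cls θ (x-1) ≠ cls θ x ∧ cls θ x ≠ cls θ (x+1) ∧ cls θ (x-1) ≠ cls θ (x+1) := by
    intro x hx1 hxk
    have hx2 : x + 1 ≤ n := by omega
    have hvq : vq θ x ≠ 2 := by
      intro h
      have := hkmin (show x ∈ {x | 1 ≤ x ∧ x ≤ n ∧ vq θ x = 2} from ⟨hx1, by omega, h⟩)
      omega
    have hform := vq_eq_middleZ θ hx1 hx2
    by_cases e1 : cls θ (x-1) = cls θ x
    · by_cases e2 : cls θ x = cls θ (x+1)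
      · exfalso
        apply hnt
        apply spreadZ θ (show x ≤ n by omega)
        intro z hz
        have hz3 : z = x - 1 ∨ z = x ∨ z = x + 1 := by
          obtain ⟨_, _, hA, hB⟩ := hz; omega
        rcases hz3 with rfl | rfl | rfl
        · exact θ.symm (rel_of_cls_eqZ θ (by omega) e1)
        · exact θ.refl _ (by omega)
        · exact rel_of_cls_eqZ θ (by omega) e2
      · exfalso
        apply hvq
        have hset2 : ({cls θ (x-1), cls θ x, cls θ (x+1)} : Set (Set ℕ))
            = {cls θ x, cls θ (x+1)} := by
          rw [e1]; ext S; simp only [Set.mem_insert_iff, Set.mem_singleton_iff]; tauto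
        rw [hform, hset2]
        exact Set.ncard_pair e2
    · by_cases e2 : cls θ x = cls θ (x+1)
      · exfalso
        apply hvq
        have hset2 : ({cls θ (x-1), cls θ x, cls θ (x+1)} : Set (Set ℕ))
            = {cls θ (x-1), cls θ x} := by
          rw [← e2]; ext S; simp only [Set.mem_insert_iff, Set.mem_singleton_iff]; tauto
        rw [hform, hset2]
        exact Set.ncard_pair e1
      · by_cases e3 : cls θ (x-1) = cls θ (x+1)
        · exfalso
          apply hvq
          have hset2 : ({cls θ (x-1), cls θ x, cls θ (x+1)} : Set (Set ℕ))
              = {cls θ (x-1), cls θ x} := by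
            rw [← e3]; ext S; simp only [Set.mem_insert_iff, Set.mem_singleton_iff]; tauto
          rw [hform, hset2]
          exact Set.ncard_pair e1
        · exact ⟨e1, e2, e3⟩
  -- F3(1) : classes of k-1 and k differ
  have hK1 : cls θ (k-1) ≠ cls θ k := by
    rcases eq_or_lt_of_le hk1 with h | h
    · obtain rfl : k = 1 := h.symm
      intro he
      exact h01 (rel_of_cls_eqZ θ (Nat.zero_le n) he)
    · have h22 := (hdist (k-1) (by omega) (by omega)).2.1
      rwa [show k - 1 + 1 = k by omega] at h22
  -- F3(2) : the fold at k
  have hfold : k < n → (cls θ (k+1) = cls θ (k-1) ∨ cls θ (k+1) = cls θ k) := by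
    intro hklt
    by_contra hcon
    push_neg at hcon
    have h3 := ncard_tripleZ hK1 (Ne.symm hcon.1) (Ne.symm hcon.2)
    rw [vq_eq_middleZ θ hk1 (by omega), h3] at hvqk
    omega
  -- Inv : injectivity and no shortcuts on [0,k]
  have inv : ∀ b, b ≤ k → (∀ a, a < b → ¬ θ.rel a b) ∧ (∀ a, a + 2 ≤ b → ¬ qrel θ a b) := by
    intro b
    induction b using Nat.strong_induction_on with
    | _ b ih =>
      intro hbk
      have part1 : ∀ a, a < b → ¬ θ.rel a b := by
        intro a hab hrel
        rcases Nat.lt_or_ge (a+1) b with hcase | hcase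
        · -- a + 1 < b
          have hq : qrel θ a (b-1) :=
            ⟨b, b-1, θ.symm hrel, θ.refl _ (by omega), by omega, by omega, by omega, by omega⟩
          obtain ⟨z, hz1, hz2⟩ := (qrel_iffZ θ (show a ≤ n by omega)).mp hq
          rcases Nat.lt_or_ge z (b-1) with hzlt | hzge
          · exact (ih (b-1) (by omega) (by omega)).1 z hzlt hz2
          · have hz3 : z = a + 1 ∧ b = a + 2 := by
              obtain ⟨_, _, hA, hB⟩ := hz1; omega
            obtain ⟨hz4, hb2⟩ := hz3
            subst hb2
            have h22 := (hdist (a+1) (by omega) (by omega)).2.2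
            rw [Nat.add_sub_cancel] at h22
            exact h22 (cls_eq_of_relZ θ hrel)
        · -- a + 1 = b
          have hb : b = a + 1 := by omega
          have hEne : cls θ (b-1) ≠ cls θ b := by
            rcases eq_or_lt_of_le hbk with h | h
            · rw [h]; exact hK1
            · exact (hdist b (by omega) h).1
          apply hEne
          rw [show b - 1 = a by omega]
          exact cls_eq_of_relZ θ hrel
      refine ⟨part1, ?_⟩
      intro a ha hq
      obtain ⟨z, hz1, hz2⟩ := (qrel_iffZ θ (show a ≤ n by omega)).mp hq
      have hzb : z < b := by obtain ⟨_, _, _, hB⟩ := hz1; omega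
      exact part1 z hzb hz2
  -- clause 3 : injectivity
  have inj : ∀ i ≤ k, ∀ j ≤ k, cls θ i = cls θ j → i = j := by
    intro i hi j hj he
    rcases lt_trichotomy i j with h | h | h
    · exact absurd (rel_of_cls_eqZ θ (by omega) he) ((inv j hj).1 i h)
    · exact h
    · exact absurd (rel_of_cls_eqZ θ (by omega) he.symm) ((inv i hi).1 j h)
  -- surjectivity machinery
  have hstep : ∀ j, j ≤ k → ∀ y, qrel θ j y → ∃ m, m ≤ k ∧ θ.rel m y := by
    intro j hj y hq
    obtain ⟨z, hz1, hz2⟩ := (qrel_iffZ θ (show j ≤ n by omega)).mp hq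
    rcases le_or_gt z k with hzk | hzk
    · exact ⟨z, hzk, hz2⟩
    · have hz3 : z = k + 1 := by obtain ⟨_, _, hA, hB⟩ := hz1; omega
      have hkn' : k < n := by obtain ⟨_, h2, _, _⟩ := hz1; omega
      subst hz3
      rcases hfold hkn' with h | h
      · exact ⟨k-1, by omega, θ.trans (θ.symm (rel_of_cls_eqZ θ (by omega) h)) hz2⟩
      · exact ⟨k, le_refl k, θ.trans (θ.symm (rel_of_cls_eqZ θ (by omega) h)) hz2⟩
  have surj : ∀ x, x ≤ n → ∃ j, j ≤ k ∧ θ.rel j x := by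
    intro x
    induction x with
    | zero => intro _; exact ⟨0, by omega, θ.refl 0 (by omega)⟩
    | succ x ihx =>
      intro hx
      obtain ⟨j, hj, hrel⟩ := ihx (by omega)
      have hq : qrel θ j (x+1) :=
        ⟨x, x+1, θ.symm hrel, θ.refl _ hx, by omega, hx, by omega, by omega⟩
      exact hstep j hj (x+1) hq
  have hrep : ∀ S ∈ classes θ, ∃ j ≤ k, S = cls θ j := by
    rintro S ⟨x, hx, rfl⟩
    obtain ⟨j, hj, hrel⟩ := surj x hx
    exact ⟨j, hj, cls_eq_of_relZ θ (θ.symm hrel)⟩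
  -- the bijection
  have hfi : ∀ i, i ≤ k → sInf {j | cls θ i = cls θ j} = i := by
    intro i hi
    have hne : sInf {j | cls θ i = cls θ j} ∈ {j | cls θ i = cls θ j} :=
      Nat.sInf_mem ⟨i, rfl⟩
    have hle : sInf {j | cls θ i = cls θ j} ≤ i := Nat.sInf_le rfl
    exact (inj i hi _ (le_trans hle hi) hne).symm
  refine ⟨⟨fun S => sInf {i | S = cls θ i}, ⟨?_, ?_, ?_⟩, ?_⟩, hrep, inj⟩
  · -- MapsTo
    intro S hS
    obtain ⟨j, hj, rfl⟩ := hrep S hS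
    simp only [Set.mem_Iic]
    rw [hfi j hj]
    exact hj
  · -- InjOn
    intro S hS T hT he
    obtain ⟨i, hi, rfl⟩ := hrep S hS
    obtain ⟨j, hj, rfl⟩ := hrep T hT
    simp only [hfi i hi, hfi j hj] at he
    rw [he]
  · -- SurjOn
    intro i hi
    exact ⟨cls θ i, ⟨i, le_trans (Set.mem_Iic.mp hi) hkn, rfl⟩, hfi i (Set.mem_Iic.mp hi)⟩
  · -- edge condition
    intro S hS T hT
    obtain ⟨i, hi, rfl⟩ := hrep S hS
    obtain ⟨j, hj, rfl⟩ := hrep T hT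
    simp only [hfi i hi, hfi j hj]
    constructor
    · rintro ⟨x, hx, y, hy, hxy⟩
      have hx' : θ.rel i x := hx
      have hy' : θ.rel j y := hy
      have hq : qrel θ i j := ⟨x, y, θ.symm hx', θ.symm hy', hxy⟩
      constructor
      · by_contra hgt
        push_neg at hgt
        exact (inv i hi).2 j (by omega) (qrel_symmZ θ hq)
      · by_contra hgt
        push_neg at hgt
        exact (inv j hj).2 i (by omega) hq
    · rintro ⟨h1, h2⟩
      exact ⟨i, θ.refl i (by omega), j, θ.refl j (by omega), by omega, by omega, h1, h2⟩
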